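/- Let (T,Σ,μ) be a complete finite measure space and f : T × ℝᵈ → ℝ ∪ {+∞} a convex normal integrand such that I_f(x) = ∫_T f(t,x) dμ is continuous at a point x₀ ∈ ℝᵈ. Then for a.e. t ∈ T, x₀ ∈ int(dom f_t), and consequently f_t is continuous on int(dom f_t) ∋ x₀ for a.e. t. -/

import Mathlib

open MeasureTheory
noncomputable section

/-- The upper integral `∫ φ dμ := inf { ∫ g dμ : g ∈ L¹, φ ≤ g a.e. }`, equal to `+∞` when no
integrable majorant exists. -/
noncomputable def upperIntegral {T : Type*} [MeasurableSpace T] (μ : Measure T)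
    (φ : T → EReal) : EReal :=
  sInf {r : EReal | ∃ g : T → ℝ, Integrable g μ ∧
    (∀ᵐ t ∂μ, φ t ≤ (g t : EReal)) ∧ r = ((∫ t, g t ∂μ : ℝ) : EReal)}

/-- Pointwise key lemma: a convex, nowhere-`⊥` `EReal`-valued function on `ℝᵈ` whose domain's
closure contains a ball around `x₀` has `x₀` in the interior of its domain and is continuous
there. -/
theorem aux_pointwise {d : ℕ} (f : (Fin d → ℝ) → EReal)
    (hconv : Convex ℝ {p : (Fin d → ℝ) × ℝ | f p.1 ≤ (p.2 : EReal)})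
    (hbot : ∀ y, f y ≠ ⊥) {x₀ : Fin d → ℝ} {ε : ℝ} (hε : 0 < ε)
    (hball : Metric.ball x₀ ε ⊆ closure {y | f y ≠ ⊤}) :
    x₀ ∈ interior {y | f y ≠ ⊤} ∧ ContinuousOn f (interior {y | f y ≠ ⊤}) := by
  set D : Set (Fin d → ℝ) := {y | f y ≠ ⊤} with hDdef
  have hmemS : ∀ x ∈ D, (x, (f x).toReal) ∈ {p : (Fin d → ℝ) × ℝ | f p.1 ≤ (p.2 : EReal)} := by
    intro x hx
    exact (EReal.coe_toReal hx (hbot x)).ge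
  have hcombo : ∀ x ∈ D, ∀ y ∈ D, ∀ a b : ℝ, 0 ≤ a → 0 ≤ b → a + b = 1 →
      f (a • x + b • y) ≤ ((a * (f x).toReal + b * (f y).toReal : ℝ) : EReal) := by
    intro x hx y hy a b ha hb hab
    have := hconv (hmemS x hx) (hmemS y hy) ha hb hab
    simpa [Prod.smul_mk, Prod.mk_add_mk, smul_eq_mul] using this
  have hD : Convex ℝ D := by
    intro x hx y hy a b ha hb hab
    exact ne_top_of_le_ne_top (EReal.coe_ne_top _) (hcombo x hx y hy a b ha hb hab)
  have hgconv : ConvexOn ℝ D (fun y => (f y).toReal) := by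
    refine ⟨hD, ?_⟩
    intro x hx y hy a b ha hb hab
    have h1 := hcombo x hx y hy a b ha hb hab
    have h2 := EReal.toReal_le_toReal h1 (hbot _) (EReal.coe_ne_top _)
    rw [EReal.toReal_coe] at h2
    simpa [smul_eq_mul] using h2
  -- x₀ is in the interior of the closure of D
  have hx0cl : x₀ ∈ interior (closure D) :=
    interior_maximal hball Metric.isOpen_ball (Metric.mem_ball_self hε)
  have hclconv : Convex ℝ (closure D) := hD.closure
  have hspan_cl : affineSpan ℝ (closure D) = ⊤ :=
    hclconv.interior_nonempty_iff_affineSpan_eq_top.1 ⟨x₀, hx0cl⟩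
  have hspanD : affineSpan ℝ D = ⊤ := by
    have hclosed : IsClosed ((affineSpan ℝ D : AffineSubspace ℝ (Fin d → ℝ)) : Set (Fin d → ℝ)) :=
      (affineSpan ℝ D).closed_of_finiteDimensional
    have h1 : closure D ⊆ (affineSpan ℝ D : Set (Fin d → ℝ)) :=
      closure_minimal (subset_affineSpan ℝ D) hclosed
    have h2 : affineSpan ℝ (closure D) ≤ affineSpan ℝ D := affineSpan_le.2 h1
    exact top_le_iff.1 (hspan_cl ▸ h2)
  obtain ⟨z, hz⟩ : (interior D).Nonempty :=
    hD.interior_nonempty_iff_affineSpan_eq_top.2 hspanD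
  -- x₀ ∈ interior D
  have hx0int : x₀ ∈ interior D := by
    rcases eq_or_ne z x₀ with rfl | hzx
    · exact hz
    · obtain ⟨δ, hδ, hδball⟩ := Metric.mem_nhds_iff.1 (mem_interior_iff_mem_nhds.1 hx0cl)
      have hn : (0:ℝ) < ‖x₀ - z‖ := by
        rw [norm_pos_iff, sub_ne_zero]
        exact fun h => hzx h.symm
      set c : ℝ := δ / (2 * ‖x₀ - z‖) with hcdef
      have hc : 0 < c := div_pos hδ (by positivity)
      set w : Fin d → ℝ := x₀ + c • (x₀ - z) with hwdef
      have hw : w ∈ closure D := by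
        apply hδball
        have : dist w x₀ = c * ‖x₀ - z‖ := by
          rw [dist_eq_norm]
          have : w - x₀ = c • (x₀ - z) := by rw [hwdef]; abel
          rw [this, norm_smul, Real.norm_eq_abs, abs_of_pos hc]
        rw [Metric.mem_ball, this, hcdef]
        rw [div_mul_eq_mul_div, mul_comm (2:ℝ) ‖x₀ - z‖, ← div_div,
          mul_div_assoc, div_self hn.ne']
        linarith
      have hc1 : (0:ℝ) < 1 + c := by linarith
      have hkey : (c / (1 + c)) • z + (1 / (1 + c)) • w = x₀ := by
        rw [hwdef]
        match_scalars <;> field_simp <;> ring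
      have hab : c / (1 + c) + 1 / (1 + c) = 1 := by field_simp; ring
      have := hD.combo_interior_closure_mem_interior hz hw
        (div_pos hc hc1) (by positivity) hab
      rwa [hkey] at this
  refine ⟨hx0int, ?_⟩
  have hgc : ContinuousOn (fun y => (f y).toReal) (interior D) :=
    hgconv.continuousOn_interior
  have hcc : ContinuousOn (fun y => (((f y).toReal : ℝ) : EReal)) (interior D) :=
    continuous_coe_real_ereal.comp_continuousOn hgc
  refine hcc.congr ?_
  intro y hy
  exact (EReal.coe_toReal (interior_subset hy) (hbot y)).symm

/-- If `f` is a convex normal integrand on `T × ℝᵈ` and `I_f` is finite and continuous at a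
point `x₀ ∈ ℝᵈ`, then for a.e. `t`, `x₀ ∈ int(dom f_t)` and `f_t` is continuous on
`int(dom f_t)`. -/
theorem ae_mem_interior_domain_and_continuousOn
    {d : ℕ} {T : Type*} [MeasurableSpace T] (μ : Measure T)
    [IsFiniteMeasure μ] [μ.IsComplete]
    (f : T → (Fin d → ℝ) → EReal)
    (hlsc : ∀ᵐ t ∂μ, LowerSemicontinuous (f t))
    (hconv : ∀ᵐ t ∂μ, Convex ℝ {p : (Fin d → ℝ) × ℝ | f t p.1 ≤ (p.2 : EReal)})
    (hproper : ∀ᵐ t ∂μ, ∀ y, f t y ≠ ⊥)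
    (x₀ : Fin d → ℝ)
    (hfin : ∃ r : ℝ, upperIntegral μ (fun t => f t x₀) = (r : EReal))
    (hcont : ContinuousAt (fun y => upperIntegral μ (fun t => f t y)) x₀) :
    ∀ᵐ t ∂μ, x₀ ∈ interior {y | f t y ≠ ⊤} ∧
      ContinuousOn (f t) (interior {y | f t y ≠ ⊤}) := by
  obtain ⟨r, hr⟩ := hfin
  have hopen : (fun y => upperIntegral μ (fun t => f t y)) ⁻¹' (Set.Iio ⊤) ∈ nhds x₀ := by
    apply hcont.preimage_mem_nhds
    have : upperIntegral μ (fun t => f t x₀) < ⊤ := by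
      rw [hr]; exact EReal.coe_lt_top r
    exact isOpen_Iio.mem_nhds this
  obtain ⟨ε, hε, hball⟩ := Metric.mem_nhds_iff.1 hopen
  obtain ⟨Q, hQb, hQc, hQd⟩ :=
    (TopologicalSpace.IsSeparable.of_separableSpace (Metric.ball x₀ ε)).exists_countable_dense_subset
  have hae1 : ∀ y ∈ Q, ∀ᵐ t ∂μ, f t y ≠ ⊤ := by
    intro y hy
    have hlt : upperIntegral μ (fun t => f t y) < ⊤ := hball (hQb hy)
    rw [upperIntegral] at hlt
    have hne : {r' : EReal | ∃ g : T → ℝ, Integrable g μ ∧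
        (∀ᵐ t ∂μ, f t y ≤ (g t : EReal)) ∧ r' = ((∫ t, g t ∂μ : ℝ) : EReal)}.Nonempty := by
      by_contra h
      rw [Set.not_nonempty_iff_eq_empty] at h
      rw [h, sInf_empty] at hlt
      exact lt_irrefl _ hlt
    obtain ⟨r', g, hg, hgle, _⟩ := hne
    filter_upwards [hgle] with t ht
    exact ne_top_of_le_ne_top (EReal.coe_ne_top _) ht
  have hae : ∀ᵐ t ∂μ, ∀ y ∈ Q, f t y ≠ ⊤ := (ae_ball_iff hQc).2 hae1
  filter_upwards [hae, hconv, hproper] with t h1 h2 h3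
  apply aux_pointwise (f t) h2 h3 hε
  refine hQd.trans (closure_mono ?_)
  intro y hy
  exact h1 y hy
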